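/- Let Ω ⊂ ℂ³ be a bounded domain containing the origin such that for every s ∈ {1, 2, 3}, every ∂̄-closed (0,s)-form on Ω with bounded smooth coefficients equals ∂̄u for some (0,s−1)-form u with bounded smooth coefficients. Let w¹, w², w³ be (0,1)-forms on Ω with bounded smooth coefficients such that: (i) each w^j is ∂̄-closed; (ii) z_1 w¹ + z_2 w² + z_3 w³ = 0 coefficientwise on Ω; (iii) there is ε > 0 such that all coefficients of w¹, w², w³ vanish on {z ∈ Ω : |z| < ε}. Then there exist bounded smooth functions y_1, y_2, y_3 : Ω → ℂ such that, as (0,1)-forms on Ω, w¹ = −z_2 ∂̄y_3 − z_3 ∂̄y_2, w² = z_1 ∂̄y_3 − z_3 ∂̄y_1, and w³ = z_1 ∂̄y_2 + z_2 ∂̄y_1. -/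

import Mathlib

/-- The Wirtinger derivative `∂f/∂z̄_j` of `f : ℂⁿ → ℂ` at `z`, computed from the real
Fréchet derivative: `(1/2)(∂f/∂x_j + i ∂f/∂y_j)`. -/
noncomputable def wdbar {n : ℕ} (f : (Fin n → ℂ) → ℂ) (j : Fin n) (z : Fin n → ℂ) : ℂ :=
  (1 / 2) * (fderiv ℝ f z (Pi.single j 1) + Complex.I * fderiv ℝ f z (Pi.single j Complex.I))

/-- `f` is bounded on `Ω` and smooth (in the underlying real variables) on `Ω`. -/
def BddSmoothOn {n : ℕ} (Ω : Set (Fin n → ℂ)) (f : (Fin n → ℂ) → ℂ) : Prop :=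
  ContDiffOn ℝ (⊤ : ℕ∞) f Ω ∧ ∃ C, ∀ z ∈ Ω, ‖f z‖ ≤ C

/-- The coefficient family of a `(0,s)`-form is alternating in its indices. -/
def AltForm {n s : ℕ} (β : (Fin s → Fin n) → (Fin n → ℂ) → ℂ) : Prop :=
  ∀ (J : Fin s → Fin n) (σ : Equiv.Perm (Fin s)) (z : Fin n → ℂ),
    β (J ∘ σ) z = ((Equiv.Perm.sign σ : ℤ) : ℂ) * β J z

/-- The `∂̄`-derivative of a `(0,s)`-form, as a `(0,s+1)`-form:
`(∂̄β)_{j₀…j_s} = Σ_{k} (−1)^k ∂β_{j₀…ĵ_k…j_s}/∂z̄_{j_k}`. -/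
noncomputable def dbarF {n s : ℕ} (β : (Fin s → Fin n) → (Fin n → ℂ) → ℂ) :
    (Fin (s + 1) → Fin n) → (Fin n → ℂ) → ℂ :=
  fun J z => ∑ k : Fin (s + 1), (-1 : ℂ) ^ (k : ℕ) * wdbar (β (J ∘ k.succAbove)) (J k) z

open Complex Filter Bornology

namespace KZ
variable {n : ℕ} {f g : (Fin n → ℂ) → ℂ} {j k l : Fin n} {z : Fin n → ℂ}

lemma wdbar_congr (h : f =ᶠ[nhds z] g) : wdbar f j z = wdbar g j z := by
  unfold wdbar; rw [h.fderiv_eq]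

lemma wdbar_zero : wdbar (fun _ : Fin n → ℂ => (0:ℂ)) j z = 0 := by
  unfold wdbar; simp

lemma wdbar_add (hf : DifferentiableAt ℝ f z) (hg : DifferentiableAt ℝ g z) :
    wdbar (fun w => f w + g w) j z = wdbar f j z + wdbar g j z := by
  unfold wdbar; rw [fderiv_fun_add hf hg]; simp; ring

lemma wdbar_neg : wdbar (fun w => -(f w)) j z = -(wdbar f j z) := by
  unfold wdbar; rw [fderiv_fun_neg]; simp; ring

lemma wdbar_sub (hf : DifferentiableAt ℝ f z) (hg : DifferentiableAt ℝ g z) :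
    wdbar (fun w => f w - g w) j z = wdbar f j z - wdbar g j z := by
  unfold wdbar; rw [fderiv_fun_sub hf hg]; simp; ring

lemma wdbar_const_mul (c : ℂ) (hf : DifferentiableAt ℝ f z) :
    wdbar (fun w => c * f w) j z = c * wdbar f j z := by
  unfold wdbar; rw [fderiv_const_mul hf c]; simp; ring

lemma wdbar_mul (hf : DifferentiableAt ℝ f z) (hg : DifferentiableAt ℝ g z) :
    wdbar (fun w => f w * g w) j z = f z * wdbar g j z + g z * wdbar f j z := by
  unfold wdbar; rw [fderiv_fun_mul hf hg]; simp; ring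

lemma fderiv_coord (j : Fin n) (z v : Fin n → ℂ) :
    fderiv ℝ (fun w : Fin n → ℂ => w j) z v = v j := by
  have h : (fun w : Fin n → ℂ => w j) = (ContinuousLinearMap.proj (R := ℝ) j) := rfl
  rw [h, ContinuousLinearMap.fderiv]; rfl

lemma differentiableAt_coord (j : Fin n) (z : Fin n → ℂ) :
    DifferentiableAt ℝ (fun w : Fin n → ℂ => w j) z :=
  (ContinuousLinearMap.proj (R := ℝ) j : (Fin n → ℂ) →L[ℝ] ℂ).differentiableAt

lemma wdbar_coord (j k : Fin n) (z : Fin n → ℂ) : wdbar (fun w : Fin n → ℂ => w j) k z = 0 := by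
  unfold wdbar
  rw [fderiv_coord, fderiv_coord]
  rcases eq_or_ne j k with h | h
  · subst h; simp [Pi.single_apply, Complex.I_mul_I]
  · simp [Pi.single_apply, h]

lemma wdbar_coord_mul (hf : DifferentiableAt ℝ f z) (j k : Fin n) :
    wdbar (fun w => w j * f w) k z = z j * wdbar f k z := by
  rw [wdbar_mul (differentiableAt_coord j z) hf, wdbar_coord]; ring

lemma contDiffOn_wdbar {Ω : Set (Fin n → ℂ)} (hΩ : IsOpen Ω)
    (hf : ContDiffOn ℝ (⊤:ℕ∞) f Ω) (j : Fin n) : ContDiffOn ℝ (⊤:ℕ∞) (wdbar f j) Ω := by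
  have h1 : ContDiffOn ℝ (⊤:ℕ∞) (fderiv ℝ f) Ω := hf.fderiv_of_isOpen hΩ (by simp)
  have h2 : ∀ v : Fin n → ℂ, ContDiffOn ℝ (⊤:ℕ∞) (fun z => fderiv ℝ f z v) Ω := fun v =>
    (ContinuousLinearMap.apply ℝ ℂ v).contDiff.comp_contDiffOn h1
  have : ContDiffOn ℝ (⊤:ℕ∞)
      (fun z => (1/2 : ℂ) * (fderiv ℝ f z (Pi.single j 1) + Complex.I * fderiv ℝ f z (Pi.single j Complex.I))) Ω :=
    contDiffOn_const.mul ((h2 _).add (contDiffOn_const.mul (h2 _)))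
  exact this

lemma wdbar_differentiableAt {Ω : Set (Fin n → ℂ)} (hΩ : IsOpen Ω)
    (hf : ContDiffOn ℝ (⊤:ℕ∞) f Ω) (hz : z ∈ Ω) : DifferentiableAt ℝ f z :=
  (hf.differentiableOn (by simp)).differentiableAt (hΩ.mem_nhds hz)

lemma wdbar_comm {Ω : Set (Fin n → ℂ)} (hΩ : IsOpen Ω)
    (hf : ContDiffOn ℝ (⊤:ℕ∞) f Ω) (hz : z ∈ Ω) (k l : Fin n) :
    wdbar (wdbar f l) k z = wdbar (wdbar f k) l z := by
  have hm : Ω ∈ nhds z := hΩ.mem_nhds hz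
  have hdf : ContDiffAt ℝ (⊤:ℕ∞) (fderiv ℝ f) z :=
    (hf.contDiffAt hm).fderiv_right (by simp)
  have hDd : ∀ v : Fin n → ℂ, DifferentiableAt ℝ (fun w => fderiv ℝ f w v) z := fun v =>
    (ContinuousLinearMap.apply ℝ ℂ v).differentiableAt.comp z (hdf.differentiableAt (by simp))
  set H := fderiv ℝ (fderiv ℝ f) z with hH
  have hDf : ∀ v u : Fin n → ℂ, fderiv ℝ (fun w => fderiv ℝ f w v) z u = H u v := by
    intro v u
    have h : HasFDerivAt (fun w => fderiv ℝ f w v) (((ContinuousLinearMap.apply ℝ ℂ v)).comp H) z :=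
      (ContinuousLinearMap.apply ℝ ℂ v).hasFDerivAt.comp z
        ((hdf.differentiableAt (by simp)).hasFDerivAt)
    rw [h.fderiv]; rfl
  have hsymm : ∀ v u : Fin n → ℂ, H v u = H u v := by
    intro v u
    refine second_derivative_symmetric_of_eventually (f := f) ?_ ((hdf.differentiableAt (by simp)).hasFDerivAt) v u
    filter_upwards [hm] with y hy
    exact ((hf.differentiableOn (by simp)).differentiableAt (hΩ.mem_nhds hy)).hasFDerivAt
  have hcombo : ∀ v1 v2 u : Fin n → ℂ,
      fderiv ℝ (fun w => 1/2 * (fderiv ℝ f w v1 + Complex.I * fderiv ℝ f w v2)) z u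
        = 1/2 * (H u v1 + Complex.I * H u v2) := by
    intro v1 v2 u
    rw [fderiv_const_mul ((hDd v1).fun_add ((hDd v2).const_mul _)),
      fderiv_fun_add (hDd v1) ((hDd v2).const_mul _), fderiv_const_mul (hDd v2)]
    simp [hDf]; ring
  unfold wdbar
  rw [hcombo, hcombo, hcombo, hcombo]
  linear_combination (1/4 : ℂ) * hsymm (Pi.single k 1) (Pi.single l 1)
    + (Complex.I/4) * hsymm (Pi.single k 1) (Pi.single l Complex.I)
    + (Complex.I/4) * hsymm (Pi.single k Complex.I) (Pi.single l 1)
    + (Complex.I * Complex.I/4) * hsymm (Pi.single k Complex.I) (Pi.single l Complex.I)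


lemma dbar_sq {Ω : Set (Fin 3 → ℂ)} (hΩ : IsOpen Ω) (f : Fin 3 → (Fin 3 → ℂ) → ℂ)
    (hf : ∀ m, ContDiffOn ℝ (⊤:ℕ∞) (f m) Ω) {z : Fin 3 → ℂ} (hz : z ∈ Ω) (a b c : Fin 3) :
    wdbar (fun w => wdbar (f c) b w - wdbar (f b) c w) a z
      - wdbar (fun w => wdbar (f c) a w - wdbar (f a) c w) b z
      + wdbar (fun w => wdbar (f b) a w - wdbar (f a) b w) c z = 0 := by
  have hd : ∀ (m j : Fin 3), DifferentiableAt ℝ (wdbar (f m) j) z := fun m j =>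
    wdbar_differentiableAt hΩ (contDiffOn_wdbar hΩ (hf m) j) hz
  rw [wdbar_sub (hd _ _) (hd _ _), wdbar_sub (hd _ _) (hd _ _), wdbar_sub (hd _ _) (hd _ _)]
  have s1 := wdbar_comm hΩ (hf c) hz a b
  have s2 := wdbar_comm hΩ (hf b) hz a c
  have s3 := wdbar_comm hΩ (hf a) hz b c
  linear_combination s1 - s2 + s3

/-- cutoff: 0 for `t ≤ a`, 1 for `t ≥ 2a`. -/
noncomputable def kChi (a t : ℝ) : ℝ := Real.smoothTransition ((t - a) / a)

noncomputable def kPhi (a t : ℝ) : ℝ := kChi a t / t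

noncomputable def kQ {n : ℕ} (z : Fin n → ℂ) : ℝ := ∑ j, ((z j).re ^ 2 + (z j).im ^ 2)

noncomputable def kRho (a : ℝ) {n : ℕ} (z : Fin n → ℂ) : ℂ := (kPhi a (kQ z) : ℂ)

lemma kChi_contDiff {a : ℝ} : ContDiff ℝ (⊤:ℕ∞) (kChi a) :=
  Real.smoothTransition.contDiff.comp ((contDiff_id.sub contDiff_const).div_const a)

lemma kChi_zero {a t : ℝ} (ha : 0 < a) (h : t ≤ a) : kChi a t = 0 :=
  Real.smoothTransition.zero_of_nonpos (div_nonpos_iff.mpr (Or.inr ⟨by linarith, ha.le⟩))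

lemma kChi_one {a t : ℝ} (ha : 0 < a) (h : 2 * a ≤ t) : kChi a t = 1 :=
  Real.smoothTransition.one_of_one_le ((one_le_div ha).mpr (by linarith))

lemma kPhi_contDiff {a : ℝ} (ha : 0 < a) : ContDiff ℝ (⊤:ℕ∞) (kPhi a) := by
  rw [contDiff_iff_contDiffAt]
  intro t
  rcases lt_or_ge t a with h | h
  · have : kPhi a =ᶠ[nhds t] fun _ => 0 := by
      filter_upwards [Iio_mem_nhds h] with s hs
      simp [kPhi, kChi_zero ha (le_of_lt hs)]
    exact (contDiffAt_const (c := (0:ℝ))).congr_of_eventuallyEq this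
  · exact (kChi_contDiff.contDiffAt).div contDiffAt_id (ne_of_gt (lt_of_lt_of_le ha h))

lemma kPhi_abs_le {a t : ℝ} (ha : 0 < a) : |kPhi a t| ≤ 1 / a := by
  rcases le_or_gt t a with h | h
  · simp [kPhi, kChi_zero ha h]; positivity
  · rw [kPhi, kChi, abs_div, _root_.abs_of_nonneg (Real.smoothTransition.nonneg _),
      _root_.abs_of_pos (ha.trans h)]
    exact div_le_div₀ (by norm_num) (Real.smoothTransition.le_one _) ha h.le

lemma kPhi_mul {a t : ℝ} (ha : 0 < a) : kPhi a t * t = kChi a t := by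
  rcases eq_or_ne t 0 with h | h
  · simp [h, kChi_zero ha ha.le]
  · rw [kPhi, div_mul_cancel₀ _ h]

lemma kQ_contDiff {n : ℕ} : ContDiff ℝ (⊤:ℕ∞) (kQ (n := n)) := by
  apply ContDiff.sum
  intro j _
  have h : ContDiff ℝ (⊤:ℕ∞) (fun z : Fin n → ℂ => z j) :=
    (ContinuousLinearMap.proj (R := ℝ) j : (Fin n → ℂ) →L[ℝ] ℂ).contDiff
  exact ((Complex.reCLM.contDiff.comp h).pow 2).add ((Complex.imCLM.contDiff.comp h).pow 2)

lemma kQ_eq_norm {n : ℕ} (z : Fin n → ℂ) : kQ z = ∑ j, ‖z j‖ ^ 2 := by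
  unfold kQ
  congr 1; funext j
  rw [Complex.sq_norm, Complex.normSq_apply]; ring

lemma kQ_coe {n : ℕ} (z : Fin n → ℂ) :
    (kQ z : ℂ) = ∑ j, z j * (starRingEnd ℂ) (z j) := by
  unfold kQ
  push_cast
  congr 1; funext j
  rw [Complex.mul_conj, Complex.normSq_apply]
  push_cast; ring

lemma kRho_contDiff {a : ℝ} {n : ℕ} (ha : 0 < a) : ContDiff ℝ (⊤:ℕ∞) (kRho a (n := n)) :=
  Complex.ofRealCLM.contDiff.comp ((kPhi_contDiff ha).comp kQ_contDiff)

lemma kRho_norm_le {a : ℝ} {n : ℕ} (ha : 0 < a) (z : Fin n → ℂ) : ‖kRho a z‖ ≤ 1 / a := by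
  rw [kRho, Complex.norm_real, Real.norm_eq_abs]
  exact kPhi_abs_le ha

lemma kRho_mul_q {a : ℝ} {n : ℕ} (ha : 0 < a) (z : Fin n → ℂ) :
    kRho a z * (kQ z : ℂ) = (kChi a (kQ z) : ℂ) := by
  rw [kRho, ← Complex.ofReal_mul, kPhi_mul ha]


lemma contDiff_conj_coord {n : ℕ} (i : Fin n) :
    ContDiff ℝ (⊤:ℕ∞) (fun z : Fin n → ℂ => (starRingEnd ℂ) (z i)) := by
  have h : (fun z : Fin n → ℂ => (starRingEnd ℂ) (z i))
      = (Complex.conjCLE.toContinuousLinearMap.comp (ContinuousLinearMap.proj (R := ℝ) i)) := rfl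
  rw [h]
  exact ((Complex.conjCLE.toContinuousLinearMap.comp
    (ContinuousLinearMap.proj (R := ℝ) i)) : (Fin n → ℂ) →L[ℝ] ℂ).contDiff

def IsBddOn (Ω : Set (Fin 3 → ℂ)) (f : (Fin 3 → ℂ) → ℂ) : Prop := ∃ C, ∀ z ∈ Ω, ‖f z‖ ≤ C

namespace IsBddOn
variable {Ω : Set (Fin 3 → ℂ)} {f g : (Fin 3 → ℂ) → ℂ}

lemma mul (hf : IsBddOn Ω f) (hg : IsBddOn Ω g) : IsBddOn Ω (fun z => f z * g z) := by
  obtain ⟨C, hC⟩ := hf; obtain ⟨D, hD⟩ := hg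
  refine ⟨|C| * |D|, fun z hz => ?_⟩
  rw [norm_mul]
  exact mul_le_mul ((hC z hz).trans (le_abs_self C)) ((hD z hz).trans (le_abs_self D))
    (norm_nonneg _) (abs_nonneg _)

lemma add (hf : IsBddOn Ω f) (hg : IsBddOn Ω g) : IsBddOn Ω (fun z => f z + g z) := by
  obtain ⟨C, hC⟩ := hf; obtain ⟨D, hD⟩ := hg
  exact ⟨C + D, fun z hz => (norm_add_le _ _).trans (add_le_add (hC z hz) (hD z hz))⟩

lemma sub (hf : IsBddOn Ω f) (hg : IsBddOn Ω g) : IsBddOn Ω (fun z => f z - g z) := by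
  obtain ⟨C, hC⟩ := hf; obtain ⟨D, hD⟩ := hg
  exact ⟨C + D, fun z hz => (norm_sub_le _ _).trans (add_le_add (hC z hz) (hD z hz))⟩

lemma neg (hf : IsBddOn Ω f) : IsBddOn Ω (fun z => -(f z)) := by
  obtain ⟨C, hC⟩ := hf; exact ⟨C, fun z hz => by rw [norm_neg]; exact hC z hz⟩

lemma of_continuous (hbdd : Bornology.IsBounded Ω) (hf : Continuous f) : IsBddOn Ω f := by
  obtain ⟨C, hC⟩ := (Metric.isCompact_of_isClosed_isBounded isClosed_closure
    hbdd.closure).exists_bound_of_continuousOn (f := f) hf.continuousOn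
  exact ⟨C, fun z hz => hC z (subset_closure hz)⟩

end IsBddOn

lemma isBddOn_coord {Ω : Set (Fin 3 → ℂ)} (hbdd : Bornology.IsBounded Ω) (j : Fin 3) :
    IsBddOn Ω (fun z => z j) :=
  IsBddOn.of_continuous hbdd (ContinuousLinearMap.proj (R := ℝ) j :
    (Fin 3 → ℂ) →L[ℝ] ℂ).continuous

lemma dbarF_zero_expand (u : (Fin 0 → Fin 3) → (Fin 3 → ℂ) → ℂ) (J : Fin 1 → Fin 3)
    (z : Fin 3 → ℂ) : dbarF u J z = wdbar (u (fun i => i.elim0)) (J 0) z := by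
  unfold dbarF
  rw [Fin.sum_univ_one]
  have h : (J ∘ (0 : Fin 1).succAbove) = (fun i : Fin 0 => i.elim0) := funext fun i => i.elim0
  rw [h]
  norm_num

lemma dbarF_one_expand (u : (Fin 1 → Fin 3) → (Fin 3 → ℂ) → ℂ) (J : Fin 2 → Fin 3)
    (z : Fin 3 → ℂ) :
    dbarF u J z = wdbar (u (fun _ => J 1)) (J 0) z - wdbar (u (fun _ => J 0)) (J 1) z := by
  unfold dbarF
  rw [Fin.sum_univ_two]
  have h0 : (J ∘ (0 : Fin 2).succAbove) = (fun _ : Fin 1 => J 1) := by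
    funext i
    have : i = 0 := Subsingleton.elim _ _
    subst this
    show J ((0 : Fin 2).succAbove 0) = J 1
    norm_num [Fin.succAbove]
  have h1 : (J ∘ (1 : Fin 2).succAbove) = (fun _ : Fin 1 => J 0) := by
    funext i
    have : i = 0 := Subsingleton.elim _ _
    subst this
    show J ((1 : Fin 2).succAbove 0) = J 0
    norm_num [Fin.succAbove]
  rw [h0, h1]
  norm_num
  ring

lemma dbarF_two_expand (c : Fin 3 → Fin 3 → (Fin 3 → ℂ) → ℂ) (J : Fin 3 → Fin 3)
    (z : Fin 3 → ℂ) :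
    dbarF (fun K => c (K 0) (K 1)) J z
      = wdbar (c (J 1) (J 2)) (J 0) z - wdbar (c (J 0) (J 2)) (J 1) z
        + wdbar (c (J 0) (J 1)) (J 2) z := by
  unfold dbarF
  rw [Fin.sum_univ_three]
  have e1 : (0 : Fin 3).succAbove 0 = 1 := by decide
  have e2 : (0 : Fin 3).succAbove 1 = 2 := by decide
  have e3 : (1 : Fin 3).succAbove 0 = 0 := by decide
  have e4 : (1 : Fin 3).succAbove 1 = 2 := by decide
  have e5 : (2 : Fin 3).succAbove 0 = 0 := by decide
  have e6 : (2 : Fin 3).succAbove 1 = 1 := by decide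
  simp only [Function.comp_apply, e1, e2, e3, e4, e5, e6]
  norm_num
  ring

lemma perm_two : ∀ σ : Equiv.Perm (Fin 2), σ = 1 ∨ σ = Equiv.swap 0 1 := by decide

lemma perm_one : ∀ σ : Equiv.Perm (Fin 1), σ = 1 := by decide

lemma fin3_cases : ∀ i : Fin 3, i = 0 ∨ i = 1 ∨ i = 2 := by decide


noncomputable def kE (a : ℝ) (i : Fin 3) : (Fin 3 → ℂ) → ℂ :=
  fun z => kRho a z * (starRingEnd ℂ) (z i)

noncomputable def kA (a : ℝ) (W : Fin 3 → Fin 3 → (Fin 3 → ℂ) → ℂ) (i j m : Fin 3) :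
    (Fin 3 → ℂ) → ℂ :=
  fun z => kE a i z * W j m z - kE a j z * W i m z

noncomputable def kB (a : ℝ) (W : Fin 3 → Fin 3 → (Fin 3 → ℂ) → ℂ) (i j k l : Fin 3) :
    (Fin 3 → ℂ) → ℂ :=
  fun z => wdbar (kA a W i j l) k z - wdbar (kA a W i j k) l z

noncomputable def kB' (a : ℝ) (W : Fin 3 → Fin 3 → (Fin 3 → ℂ) → ℂ) (i j k l : Fin 3) :
    (Fin 3 → ℂ) → ℂ :=
  fun z => W j l z * wdbar (kE a i) k z - W j k z * wdbar (kE a i) l z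
    - W i l z * wdbar (kE a j) k z + W i k z * wdbar (kE a j) l z

noncomputable def kG (a : ℝ) (W : Fin 3 → Fin 3 → (Fin 3 → ℂ) → ℂ) (k l : Fin 3) :
    (Fin 3 → ℂ) → ℂ :=
  fun z => kRho a z * ((starRingEnd ℂ) (z 0) * kB' a W 1 2 k l z
    - (starRingEnd ℂ) (z 1) * kB' a W 0 2 k l z
    + (starRingEnd ℂ) (z 2) * kB' a W 0 1 k l z)

section main

variable {Ω : Set (Fin 3 → ℂ)} {a ε : ℝ} {W : Fin 3 → Fin 3 → (Fin 3 → ℂ) → ℂ}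

lemma kE_contDiff (ha : 0 < a) (i : Fin 3) : ContDiff ℝ (⊤:ℕ∞) (kE a i) :=
  (kRho_contDiff ha).mul (contDiff_conj_coord i)

lemma kA_contDiffOn (ha : 0 < a) (hWsm : ∀ i m, ContDiffOn ℝ (⊤:ℕ∞) (W i m) Ω)
    (i j m : Fin 3) : ContDiffOn ℝ (⊤:ℕ∞) (kA a W i j m) Ω :=
  (((kE_contDiff ha i).contDiffOn.mul (hWsm j m)).sub
    ((kE_contDiff ha j).contDiffOn.mul (hWsm i m)))

lemma wdbar_kE_contDiffOn (ha : 0 < a) (i c : Fin 3) {s : Set (Fin 3 → ℂ)} :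
    ContDiffOn ℝ (⊤:ℕ∞) (wdbar (kE a i) c) s :=
  (contDiffOn_wdbar isOpen_univ ((kE_contDiff ha i).contDiffOn) c).mono (Set.subset_univ s)

lemma wdbar_kA (hΩ : IsOpen Ω) (ha : 0 < a) (hWsm : ∀ i m, ContDiffOn ℝ (⊤:ℕ∞) (W i m) Ω)
    (i j m k : Fin 3) {z : Fin 3 → ℂ} (hz : z ∈ Ω) :
    wdbar (kA a W i j m) k z
      = kE a i z * wdbar (W j m) k z + W j m z * wdbar (kE a i) k z
      - (kE a j z * wdbar (W i m) k z + W i m z * wdbar (kE a j) k z) := by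
  have hdE : ∀ p : Fin 3, DifferentiableAt ℝ (kE a p) z := fun p =>
    (kE_contDiff ha p).differentiable (by simp) z
  have hdW : ∀ p q : Fin 3, DifferentiableAt ℝ (W p q) z := fun p q =>
    wdbar_differentiableAt hΩ (hWsm p q) hz
  have h1 : wdbar (kA a W i j m) k z
      = wdbar (fun w => kE a i w * W j m w) k z - wdbar (fun w => kE a j w * W i m w) k z :=
    wdbar_sub ((hdE i).mul (hdW j m)) ((hdE j).mul (hdW i m))
  rw [h1, wdbar_mul (hdE i) (hdW j m), wdbar_mul (hdE j) (hdW i m)]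

lemma kB'_eq_kB (hΩ : IsOpen Ω) (ha : 0 < a) (hWsm : ∀ i m, ContDiffOn ℝ (⊤:ℕ∞) (W i m) Ω)
    (hWcl : ∀ i k l : Fin 3, ∀ z ∈ Ω, wdbar (W i l) k z = wdbar (W i k) l z)
    (i j k l : Fin 3) {z : Fin 3 → ℂ} (hz : z ∈ Ω) :
    kB a W i j k l z = kB' a W i j k l z := by
  have h1 : kB a W i j k l z = wdbar (kA a W i j l) k z - wdbar (kA a W i j k) l z := rfl
  rw [h1, wdbar_kA hΩ ha hWsm i j l k hz, wdbar_kA hΩ ha hWsm i j k l hz]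
  have h2 := hWcl j k l z hz
  have h3 := hWcl i k l z hz
  unfold kB'
  linear_combination kE a i z * h2 - kE a j z * h3

lemma kA_swap (i j m : Fin 3) (z : Fin 3 → ℂ) : kA a W j i m z = -(kA a W i j m z) := by simp [kA]


lemma kB_swap (i j k l : Fin 3) (z : Fin 3 → ℂ) : kB a W j i k l z = -(kB a W i j k l z) := by
  have h : ∀ m : Fin 3, kA a W j i m = fun w => -(kA a W i j m w) :=
    fun m => funext fun w => kA_swap i j m w
  unfold kB
  rw [h l, h k]
  rw [wdbar_neg]
  rw [wdbar_neg]
  ring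

lemma kB_diag (i k l : Fin 3) (z : Fin 3 → ℂ) : kB a W i i k l z = 0 := by
  have h : ∀ m : Fin 3, kA a W i i m = fun _ => (0:ℂ) := fun m => funext fun w => by
    simp [kA]
  unfold kB
  rw [h l, h k]
  simp [wdbar_zero]

lemma kB'_swap (i j k l : Fin 3) (z : Fin 3 → ℂ) : kB' a W i j l k z = -(kB' a W i j k l z) := by
  simp [kB']; ring

lemma kG_swap (k l : Fin 3) (z : Fin 3 → ℂ) : kG a W l k z = -(kG a W k l z) := by
  simp [kG, kB']; ring

/-- `Σ_j z_j α_{j i m} = W i m` on `Ω`. -/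
lemma kT_eq (hΩ : IsOpen Ω) (ha : 0 < a) (hae : a = ε^2/2)
    (hWtau : ∀ m : Fin 3, ∀ z ∈ Ω, z 0 * W 0 m z + z 1 * W 1 m z + z 2 * W 2 m z = 0)
    (hW0 : ∀ i m : Fin 3, ∀ z ∈ Ω, kQ z < ε^2 → W i m z = 0)
    (i m : Fin 3) {z : Fin 3 → ℂ} (hz : z ∈ Ω) :
    z 0 * kA a W 0 i m z + z 1 * kA a W 1 i m z + z 2 * kA a W 2 i m z = W i m z := by
  rcases lt_or_ge (kQ z) (ε^2) with hlt | hge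
  · simp [kA, hW0 i m z hz hlt, hW0 0 m z hz hlt, hW0 1 m z hz hlt, hW0 2 m z hz hlt]
  · have h1 : kRho a z * (kQ z : ℂ) = 1 := by
      rw [kRho_mul_q ha, kChi_one ha (by rw [hae]; linarith)]
      norm_num
    have hQ3 : (kQ z : ℂ) = z 0 * (starRingEnd ℂ) (z 0) + z 1 * (starRingEnd ℂ) (z 1)
        + z 2 * (starRingEnd ℂ) (z 2) := by
      rw [kQ_coe, Fin.sum_univ_three]
    have hτ := hWtau m z hz
    simp only [kA, kE]
    rw [hQ3] at h1
    linear_combination (W i m z) * h1 - (kRho a z * (starRingEnd ℂ) (z i)) * hτ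

/-- Koszul constraint: `Σ_j z_j (∂̄α)_{j i} = 0` on `Ω`. -/
lemma kC_eq (hΩ : IsOpen Ω) (ha : 0 < a) (hae : a = ε^2/2)
    (hWsm : ∀ i m, ContDiffOn ℝ (⊤:ℕ∞) (W i m) Ω)
    (hWcl : ∀ i k l : Fin 3, ∀ z ∈ Ω, wdbar (W i l) k z = wdbar (W i k) l z)
    (hWtau : ∀ m : Fin 3, ∀ z ∈ Ω, z 0 * W 0 m z + z 1 * W 1 m z + z 2 * W 2 m z = 0)
    (hW0 : ∀ i m : Fin 3, ∀ z ∈ Ω, kQ z < ε^2 → W i m z = 0)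
    (i k l : Fin 3) {z : Fin 3 → ℂ} (hz : z ∈ Ω) :
    z 0 * kB a W 0 i k l z + z 1 * kB a W 1 i k l z + z 2 * kB a W 2 i k l z = 0 := by
  have hdA : ∀ p m : Fin 3, DifferentiableAt ℝ (kA a W p i m) z := fun p m =>
    wdbar_differentiableAt hΩ (kA_contDiffOn ha hWsm p i m) hz
  have hL : ∀ (m c : Fin 3),
      z 0 * wdbar (kA a W 0 i m) c z + z 1 * wdbar (kA a W 1 i m) c z
        + z 2 * wdbar (kA a W 2 i m) c z = wdbar (W i m) c z := by
    intro m c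
    have hev : (fun w => (w 0 * kA a W 0 i m w + w 1 * kA a W 1 i m w) + w 2 * kA a W 2 i m w)
        =ᶠ[nhds z] W i m := by
      filter_upwards [hΩ.mem_nhds hz] with w hw
      have h := kT_eq hΩ ha hae hWtau hW0 i m hw
      linear_combination h
    have d0 : DifferentiableAt ℝ (fun w => w 0 * kA a W 0 i m w) z :=
      (differentiableAt_coord 0 z).mul (hdA 0 m)
    have d1 : DifferentiableAt ℝ (fun w => w 1 * kA a W 1 i m w) z :=
      (differentiableAt_coord 1 z).mul (hdA 1 m)
    have d2 : DifferentiableAt ℝ (fun w => w 2 * kA a W 2 i m w) z :=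
      (differentiableAt_coord 2 z).mul (hdA 2 m)
    have hw : wdbar (fun w => (w 0 * kA a W 0 i m w + w 1 * kA a W 1 i m w)
        + w 2 * kA a W 2 i m w) c z = wdbar (W i m) c z := wdbar_congr hev
    rw [wdbar_add (d0.fun_add d1) d2, wdbar_add d0 d1, wdbar_coord_mul (hdA 0 m) 0 c,
      wdbar_coord_mul (hdA 1 m) 1 c, wdbar_coord_mul (hdA 2 m) 2 c] at hw
    linear_combination hw
  have hB : ∀ p : Fin 3, kB a W p i k l z
      = wdbar (kA a W p i l) k z - wdbar (kA a W p i k) l z := fun p => rfl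
  rw [hB 0, hB 1, hB 2]
  linear_combination hL l k - hL k l + hWcl i k l z hz

/-- Pointwise Koszul exactness: `∂̄α = ι_z G` on `Ω`. -/
lemma kK_eq (hΩ : IsOpen Ω) (ha : 0 < a) (hae : a = ε^2/2)
    (hWsm : ∀ i m, ContDiffOn ℝ (⊤:ℕ∞) (W i m) Ω)
    (hWcl : ∀ i k l : Fin 3, ∀ z ∈ Ω, wdbar (W i l) k z = wdbar (W i k) l z)
    (hWtau : ∀ m : Fin 3, ∀ z ∈ Ω, z 0 * W 0 m z + z 1 * W 1 m z + z 2 * W 2 m z = 0)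
    (hW0 : ∀ i m : Fin 3, ∀ z ∈ Ω, kQ z < ε^2 → W i m z = 0)
    (k l : Fin 3) {z : Fin 3 → ℂ} (hz : z ∈ Ω) :
    kB a W 0 1 k l z = z 2 * kG a W k l z ∧
    kB a W 0 2 k l z = -(z 1) * kG a W k l z ∧
    kB a W 1 2 k l z = z 0 * kG a W k l z := by
  rcases lt_or_ge (kQ z) (ε^2) with hlt | hge
  · -- near the origin: both sides vanish
    have hN : IsOpen ({w : Fin 3 → ℂ | kQ w < ε^2} ∩ Ω) :=
      (isOpen_lt kQ_contDiff.continuous continuous_const).inter hΩ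
    have hzN : z ∈ ({w : Fin 3 → ℂ | kQ w < ε^2} ∩ Ω) := ⟨hlt, hz⟩
    have hA0 : ∀ i j m : Fin 3, kA a W i j m =ᶠ[nhds z] (fun _ => (0:ℂ)) := by
      intro i j m
      filter_upwards [hN.mem_nhds hzN] with w hw
      simp [kA, hW0 i m w hw.2 hw.1, hW0 j m w hw.2 hw.1]
    have hB0 : ∀ i j : Fin 3, kB a W i j k l z = 0 := by
      intro i j
      have e1 : wdbar (kA a W i j l) k z = 0 := by rw [wdbar_congr (hA0 i j l), wdbar_zero]
      have e2 : wdbar (kA a W i j k) l z = 0 := by rw [wdbar_congr (hA0 i j k), wdbar_zero]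
      show wdbar (kA a W i j l) k z - wdbar (kA a W i j k) l z = 0
      rw [e1, e2]; ring
    have hWz : ∀ i m : Fin 3, W i m z = 0 := fun i m => hW0 i m z hz hlt
    have hG0 : kG a W k l z = 0 := by simp [kG, kB', hWz]
    refine ⟨?_, ?_, ?_⟩ <;> rw [hB0, hG0] <;> ring
  · have h1 : kRho a z * (kQ z : ℂ) = 1 := by
      rw [kRho_mul_q ha, kChi_one ha (by rw [hae]; linarith)]
      norm_num
    have hQ3 : (kQ z : ℂ) = z 0 * (starRingEnd ℂ) (z 0) + z 1 * (starRingEnd ℂ) (z 1)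
        + z 2 * (starRingEnd ℂ) (z 2) := by
      rw [kQ_coe, Fin.sum_univ_three]
    rw [hQ3] at h1
    have c0' := kC_eq hΩ ha hae hWsm hWcl hWtau hW0 0 k l hz
    have c1' := kC_eq hΩ ha hae hWsm hWcl hWtau hW0 1 k l hz
    have c2' := kC_eq hΩ ha hae hWsm hWcl hWtau hW0 2 k l hz
    -- clean up using skew-symmetry
    have c0 : z 1 * kB a W 0 1 k l z + z 2 * kB a W 0 2 k l z = 0 := by
      have e1 := kB_swap (a := a) (W := W) 0 1 k l z
      have e2 := kB_swap (a := a) (W := W) 0 2 k l z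
      have e3 := kB_diag (a := a) (W := W) 0 k l z
      linear_combination -c0' + z 0 * e3 + z 1 * e1 + z 2 * e2
    have c1 : z 0 * kB a W 0 1 k l z - z 2 * kB a W 1 2 k l z = 0 := by
      have e1 := kB_diag (a := a) (W := W) 1 k l z
      have e2 := kB_swap (a := a) (W := W) 1 2 k l z
      linear_combination c1' - z 1 * e1 - z 2 * e2
    have c2 : z 0 * kB a W 0 2 k l z + z 1 * kB a W 1 2 k l z = 0 := by
      have e1 := kB_diag (a := a) (W := W) 2 k l z
      linear_combination c2' - z 2 * e1
    have hb12 : kB' a W 1 2 k l z = kB a W 1 2 k l z :=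
      (kB'_eq_kB hΩ ha hWsm hWcl 1 2 k l hz).symm
    have hb02 : kB' a W 0 2 k l z = kB a W 0 2 k l z :=
      (kB'_eq_kB hΩ ha hWsm hWcl 0 2 k l hz).symm
    have hb01 : kB' a W 0 1 k l z = kB a W 0 1 k l z :=
      (kB'_eq_kB hΩ ha hWsm hWcl 0 1 k l hz).symm
    have hGv : kG a W k l z = kRho a z * ((starRingEnd ℂ) (z 0) * kB a W 1 2 k l z
        - (starRingEnd ℂ) (z 1) * kB a W 0 2 k l z
        + (starRingEnd ℂ) (z 2) * kB a W 0 1 k l z) := by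
      unfold kG
      rw [hb12, hb02, hb01]
    refine ⟨?_, ?_, ?_⟩
    · rw [hGv]
      linear_combination -(kB a W 0 1 k l z) * h1
        + (kRho a z * (starRingEnd ℂ) (z 0)) * c1
        + (kRho a z * (starRingEnd ℂ) (z 1)) * c0
    · rw [hGv]
      linear_combination -(kB a W 0 2 k l z) * h1
        + (kRho a z * (starRingEnd ℂ) (z 0)) * c2
        + (kRho a z * (starRingEnd ℂ) (z 2)) * c0
    · rw [hGv]
      linear_combination -(kB a W 1 2 k l z) * h1
        + (kRho a z * (starRingEnd ℂ) (z 1)) * c2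
        - (kRho a z * (starRingEnd ℂ) (z 2)) * c1

lemma kG_contDiffOn (hΩ : IsOpen Ω) (ha : 0 < a)
    (hWsm : ∀ i m, ContDiffOn ℝ (⊤:ℕ∞) (W i m) Ω) (k l : Fin 3) :
    ContDiffOn ℝ (⊤:ℕ∞) (kG a W k l) Ω := by
  have hB' : ∀ i j : Fin 3, ContDiffOn ℝ (⊤:ℕ∞) (kB' a W i j k l) Ω := fun i j =>
    ((((hWsm j l).mul (wdbar_kE_contDiffOn ha i k)).sub
      ((hWsm j k).mul (wdbar_kE_contDiffOn ha i l))).sub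
      ((hWsm i l).mul (wdbar_kE_contDiffOn ha j k))).add
      ((hWsm i k).mul (wdbar_kE_contDiffOn ha j l))
  exact (kRho_contDiff ha).contDiffOn.mul
    ((((contDiff_conj_coord 0).contDiffOn.mul (hB' 1 2)).sub
      ((contDiff_conj_coord 1).contDiffOn.mul (hB' 0 2))).add
      ((contDiff_conj_coord 2).contDiffOn.mul (hB' 0 1)))

lemma kG_bdd (hbdd : Bornology.IsBounded Ω) (ha : 0 < a)
    (hWbd : ∀ i m, IsBddOn Ω (W i m)) (k l : Fin 3) : IsBddOn Ω (kG a W k l) := by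
  have hwE : ∀ i c : Fin 3, IsBddOn Ω (wdbar (kE a i) c) := fun i c =>
    IsBddOn.of_continuous hbdd (by
      have := (wdbar_kE_contDiffOn (s := Set.univ) ha i c).continuousOn
      exact continuousOn_univ.mp this)
  have hρ : IsBddOn Ω (kRho a) :=
    IsBddOn.of_continuous hbdd (kRho_contDiff ha).continuous
  have hcj : ∀ i : Fin 3, IsBddOn Ω (fun z => (starRingEnd ℂ) (z i)) := fun i =>
    IsBddOn.of_continuous hbdd (contDiff_conj_coord i).continuous
  have hB' : ∀ i j : Fin 3, IsBddOn Ω (kB' a W i j k l) := fun i j =>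
    ((((hWbd j l).mul (hwE i k)).sub ((hWbd j k).mul (hwE i l))).sub
      ((hWbd i l).mul (hwE j k))).add ((hWbd i k).mul (hwE j l))
  exact hρ.mul ((((hcj 0).mul (hB' 1 2)).sub ((hcj 1).mul (hB' 0 2))).add
    ((hcj 2).mul (hB' 0 1)))

lemma kG_dbar_zero (hΩ : IsOpen Ω) (ha : 0 < a) (hae : a = ε^2/2) (hε : 0 < ε)
    (hWsm : ∀ i m, ContDiffOn ℝ (⊤:ℕ∞) (W i m) Ω)
    (hWcl : ∀ i k l : Fin 3, ∀ z ∈ Ω, wdbar (W i l) k z = wdbar (W i k) l z)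
    (hWtau : ∀ m : Fin 3, ∀ z ∈ Ω, z 0 * W 0 m z + z 1 * W 1 m z + z 2 * W 2 m z = 0)
    (hW0 : ∀ i m : Fin 3, ∀ z ∈ Ω, kQ z < ε^2 → W i m z = 0)
    (J : Fin 3 → Fin 3) {z : Fin 3 → ℂ} (hz : z ∈ Ω) :
    dbarF (fun K : Fin 2 → Fin 3 => kG a W (K 0) (K 1)) J z = 0 := by
  have hKK := fun (k l : Fin 3) {w} (hw : w ∈ Ω) =>
    kK_eq hΩ ha hae hWsm hWcl hWtau hW0 k l hw
  have hGdiff : ∀ p q : Fin 3, DifferentiableAt ℝ (kG a W p q) z :=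
    fun p q => wdbar_differentiableAt hΩ (kG_contDiffOn hΩ ha hWsm p q) hz
  rw [dbarF_two_expand]
  rcases lt_or_ge (kQ z) (ε^2) with hlt | hge
  · -- kG vanishes near z
    have hN : IsOpen ({w : Fin 3 → ℂ | kQ w < ε^2} ∩ Ω) :=
      (isOpen_lt kQ_contDiff.continuous continuous_const).inter hΩ
    have hzN : z ∈ ({w : Fin 3 → ℂ | kQ w < ε^2} ∩ Ω) := ⟨hlt, hz⟩
    have hG0 : ∀ p q : Fin 3, kG a W p q =ᶠ[nhds z] (fun _ => (0:ℂ)) := by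
      intro p q
      filter_upwards [hN.mem_nhds hzN] with w hw
      have hWz : ∀ i m : Fin 3, W i m w = 0 := fun i m => hW0 i m w hw.2 hw.1
      simp [kG, kB', hWz]
    have h0 : ∀ p q c : Fin 3, wdbar (kG a W p q) c z = 0 := fun p q c => by
      rw [wdbar_congr (hG0 p q), wdbar_zero]
    rw [h0, h0, h0]; ring
  · -- away from the origin
    have hznz : ∃ m : Fin 3, z m ≠ 0 := by
      by_contra h
      push_neg at h
      have : kQ z = 0 := by simp [kQ, h]
      have : (0:ℝ) < ε^2 := by positivity
      linarith [hge, this.trans_le hge]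
    obtain ⟨m, hm⟩ := hznz
    have key : ∀ (i j mi : Fin 3) (sgn : ℂ), sgn ≠ 0 →
        (∀ p q : Fin 3, ∀ w ∈ Ω, (sgn * w mi) * kG a W p q w = kB a W i j p q w) →
        z mi ≠ 0 →
        wdbar (kG a W (J 1) (J 2)) (J 0) z - wdbar (kG a W (J 0) (J 2)) (J 1) z
          + wdbar (kG a W (J 0) (J 1)) (J 2) z = 0 := by
      intro i j mi sgn hsgn hrel hzm
      have hc : ∀ p q c : Fin 3, (sgn * z mi) * wdbar (kG a W p q) c z
          = wdbar (fun w => wdbar (kA a W i j q) p w - wdbar (kA a W i j p) q w) c z := by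
        intro p q c
        have h1 : wdbar (fun w => w mi * kG a W p q w) c z
            = z mi * wdbar (kG a W p q) c z := wdbar_coord_mul (hGdiff p q) mi c
        have h2 : wdbar (fun w => sgn * (w mi * kG a W p q w)) c z
            = sgn * (z mi * wdbar (kG a W p q) c z) := by
          rw [wdbar_const_mul sgn ((differentiableAt_coord mi z).fun_mul (hGdiff p q)), h1]
        have h3 : (fun w => sgn * (w mi * kG a W p q w))
            =ᶠ[nhds z] (fun w => wdbar (kA a W i j q) p w - wdbar (kA a W i j p) q w) := by
          filter_upwards [hΩ.mem_nhds hz] with w hw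
          have h4 := hrel p q w hw
          have h5 : kB a W i j p q w
              = wdbar (kA a W i j q) p w - wdbar (kA a W i j p) q w := rfl
          rw [← h5, ← h4]; ring
        rw [← wdbar_congr h3, h2]; ring
      apply mul_left_cancel₀ (mul_ne_zero hsgn hzm)
      rw [mul_zero]
      have hsq := dbar_sq hΩ (kA a W i j) (fun m => kA_contDiffOn ha hWsm i j m) hz
        (J 0) (J 1) (J 2)
      linear_combination hc (J 1) (J 2) (J 0) - hc (J 0) (J 2) (J 1)
        + hc (J 0) (J 1) (J 2) + hsq
    fin_cases m
    · refine key 1 2 0 1 one_ne_zero (fun p q w hw => ?_) hm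
      have := (hKK p q hw).2.2
      linear_combination -this
    · refine key 0 2 1 (-1) (by norm_num) (fun p q w hw => ?_) hm
      have := (hKK p q hw).2.1
      linear_combination -this
    · refine key 0 1 2 1 one_ne_zero (fun p q w hw => ?_) hm
      have := (hKK p q hw).1
      linear_combination -this

end main
end KZ


open KZ

/-- The `∂̄`-Koszul complex proposition in `ℂ³` (case `r = 1`, `s = 1`, `F = (z₁, z₂, z₃)`),
for bounded smooth data. -/
theorem koszul_dim_three_Linf (Ω : Set (Fin 3 → ℂ))
    (hopen : IsOpen Ω) (hconn : IsConnected Ω) (hbdd : Bornology.IsBounded Ω)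
    (h0 : (0 : Fin 3 → ℂ) ∈ Ω)
    (hsolv : ∀ t : ℕ, t + 1 ≤ 3 →
      ∀ β : (Fin (t + 1) → Fin 3) → (Fin 3 → ℂ) → ℂ,
        (∀ J, BddSmoothOn Ω (β J)) → AltForm β →
        (∀ J, ∀ z ∈ Ω, dbarF β J z = 0) →
        ∃ u : (Fin t → Fin 3) → (Fin 3 → ℂ) → ℂ,
          (∀ J, BddSmoothOn Ω (u J)) ∧ AltForm u ∧
          ∀ J, ∀ z ∈ Ω, dbarF u J z = β J z)
    (w1 w2 w3 : Fin 3 → (Fin 3 → ℂ) → ℂ)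
    (hsm : ∀ k, BddSmoothOn Ω (w1 k) ∧ BddSmoothOn Ω (w2 k) ∧ BddSmoothOn Ω (w3 k))
    (hcl : ∀ k l : Fin 3, ∀ z ∈ Ω,
      wdbar (w1 l) k z = wdbar (w1 k) l z ∧
      wdbar (w2 l) k z = wdbar (w2 k) l z ∧
      wdbar (w3 l) k z = wdbar (w3 k) l z)
    (htau : ∀ k : Fin 3, ∀ z ∈ Ω, z 0 * w1 k z + z 1 * w2 k z + z 2 * w3 k z = 0)
    (hsupp : ∃ ε > 0, ∀ k : Fin 3, ∀ z ∈ Ω, (∑ j : Fin 3, ‖z j‖ ^ 2) < ε ^ 2 →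
      w1 k z = 0 ∧ w2 k z = 0 ∧ w3 k z = 0) :
    ∃ y1 y2 y3 : (Fin 3 → ℂ) → ℂ,
      BddSmoothOn Ω y1 ∧ BddSmoothOn Ω y2 ∧ BddSmoothOn Ω y3 ∧
      ∀ k : Fin 3, ∀ z ∈ Ω,
        w1 k z = -(z 1) * wdbar y3 k z - z 2 * wdbar y2 k z ∧
        w2 k z = z 0 * wdbar y3 k z - z 2 * wdbar y1 k z ∧
        w3 k z = z 0 * wdbar y2 k z + z 1 * wdbar y1 k z := by
  classical
  obtain ⟨ε, hε, hw0⟩ := hsupp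
  set a : ℝ := ε ^ 2 / 2 with hadef
  have hae : a = ε ^ 2 / 2 := hadef
  have ha : 0 < a := by rw [hae]; positivity
  set W : Fin 3 → Fin 3 → (Fin 3 → ℂ) → ℂ := ![w1, w2, w3] with hWdef
  have hW0e : W 0 = w1 := by rw [hWdef]; rfl
  have hW1e : W 1 = w2 := by rw [hWdef]; rfl
  have hW2e : W 2 = w3 := by rw [hWdef]; rfl
  have hWsm : ∀ i m, ContDiffOn ℝ (⊤:ℕ∞) (W i m) Ω := by
    intro i m
    rcases fin3_cases i with h | h | h <;> subst h
    · rw [hW0e]; exact (hsm m).1.1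
    · rw [hW1e]; exact (hsm m).2.1.1
    · rw [hW2e]; exact (hsm m).2.2.1
  have hWbd : ∀ i m, IsBddOn Ω (W i m) := by
    intro i m
    rcases fin3_cases i with h | h | h <;> subst h
    · rw [hW0e]; exact (hsm m).1.2
    · rw [hW1e]; exact (hsm m).2.1.2
    · rw [hW2e]; exact (hsm m).2.2.2
  have hWcl : ∀ i k l : Fin 3, ∀ z ∈ Ω, wdbar (W i l) k z = wdbar (W i k) l z := by
    intro i k l z hz
    rcases fin3_cases i with h | h | h <;> subst h
    · rw [hW0e]; exact (hcl k l z hz).1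
    · rw [hW1e]; exact (hcl k l z hz).2.1
    · rw [hW2e]; exact (hcl k l z hz).2.2
  have hWtau : ∀ m : Fin 3, ∀ z ∈ Ω, z 0 * W 0 m z + z 1 * W 1 m z + z 2 * W 2 m z = 0 := by
    intro m z hz
    rw [hW0e, hW1e, hW2e]
    exact htau m z hz
  have hW0' : ∀ i m : Fin 3, ∀ z ∈ Ω, kQ z < ε ^ 2 → W i m z = 0 := by
    intro i m z hz hq
    have hq' : (∑ j : Fin 3, ‖z j‖ ^ 2) < ε ^ 2 := by rwa [← kQ_eq_norm]
    rcases fin3_cases i with h | h | h <;> subst h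
    · rw [hW0e]; exact (hw0 m z hz hq').1
    · rw [hW1e]; exact (hw0 m z hz hq').2.1
    · rw [hW2e]; exact (hw0 m z hz hq').2.2
  -- Step 1: solve ∂̄v = G
  have hGFsm : ∀ J : Fin 2 → Fin 3, BddSmoothOn Ω ((fun K : Fin 2 → Fin 3 => kG a W (K 0) (K 1)) J) :=
    fun J => ⟨kG_contDiffOn hopen ha hWsm _ _, kG_bdd hbdd ha hWbd _ _⟩
  have hGFalt : AltForm (fun K : Fin 2 → Fin 3 => kG a W (K 0) (K 1)) := by
    intro J σ z
    rcases perm_two σ with h | h <;> subst h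
    · simp
    · have e0 : (J ∘ (Equiv.swap (0:Fin 2) 1)) 0 = J 1 := by simp
      have e1 : (J ∘ (Equiv.swap (0:Fin 2) 1)) 1 = J 0 := by simp
      have hsgn : ((Equiv.Perm.sign (Equiv.swap (0:Fin 2) 1) : ℤ) : ℂ) = -1 := by
        rw [Equiv.Perm.sign_swap (by decide)]; norm_num
      rw [hsgn]
      show kG a W ((J ∘ (Equiv.swap (0:Fin 2) 1)) 0) ((J ∘ (Equiv.swap (0:Fin 2) 1)) 1) z
        = -1 * kG a W (J 0) (J 1) z
      rw [e0, e1, kG_swap]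
      ring
  have hGFdb : ∀ J : Fin 3 → Fin 3, ∀ z ∈ Ω,
      dbarF (fun K : Fin 2 → Fin 3 => kG a W (K 0) (K 1)) J z = 0 :=
    fun J z hz => kG_dbar_zero hopen ha hae hε hWsm hWcl hWtau hW0' J hz
  obtain ⟨v, hvsm, -, hvd⟩ := hsolv 1 (by norm_num)
    (fun K : Fin 2 → Fin 3 => kG a W (K 0) (K 1)) hGFsm hGFalt hGFdb
  have hvmsm : ∀ m : Fin 3, ContDiffOn ℝ (⊤:ℕ∞) (v (fun _ => m)) Ω := fun m => (hvsm _).1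
  have hvmbd : ∀ m : Fin 3, IsBddOn Ω (v (fun _ => m)) := fun m => (hvsm _).2
  have hFV : ∀ k l : Fin 3, ∀ z ∈ Ω,
      wdbar (v fun _ => l) k z - wdbar (v fun _ => k) l z = kG a W k l z := by
    intro k l z hz
    have h := hvd ![k, l] z hz
    rw [dbarF_one_expand] at h
    exact h
  -- differentiability helpers
  have hdA : ∀ (i j m : Fin 3) {z : Fin 3 → ℂ}, z ∈ Ω → DifferentiableAt ℝ (kA a W i j m) z :=
    fun i j m z hz => wdbar_differentiableAt hopen (kA_contDiffOn ha hWsm i j m) hz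
  have hdv : ∀ (m : Fin 3) {z : Fin 3 → ℂ}, z ∈ Ω → DifferentiableAt ℝ (v fun _ => m) z :=
    fun m z hz => wdbar_differentiableAt hopen (hvmsm m) hz
  have hKK := fun (k l : Fin 3) {z : Fin 3 → ℂ} (hz : z ∈ Ω) =>
    kK_eq hopen ha hae hWsm hWcl hWtau hW0' k l hz
  -- generic second-stage solver
  have happ : ∀ P : Fin 3 → (Fin 3 → ℂ) → ℂ,
      (∀ m, ContDiffOn ℝ (⊤:ℕ∞) (P m) Ω) → (∀ m, IsBddOn Ω (P m)) →
      (∀ k l : Fin 3, ∀ z ∈ Ω, wdbar (P l) k z - wdbar (P k) l z = 0) →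
      ∃ y, BddSmoothOn Ω y ∧ ∀ m : Fin 3, ∀ z ∈ Ω, wdbar y m z = P m z := by
    intro P hPsm hPbd hPcl
    have halt : AltForm (fun J : Fin 1 → Fin 3 => P (J 0)) := by
      intro J σ z
      rw [perm_one σ]
      simp
    have hdb : ∀ J : Fin 2 → Fin 3, ∀ z ∈ Ω, dbarF (fun J : Fin 1 → Fin 3 => P (J 0)) J z = 0 := by
      intro J z hz
      rw [dbarF_one_expand]
      exact hPcl (J 0) (J 1) z hz
    obtain ⟨u, husm, -, hud⟩ := hsolv 0 (by norm_num) (fun J : Fin 1 → Fin 3 => P (J 0))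
      (fun J => ⟨hPsm _, hPbd _⟩) halt hdb
    refine ⟨u (fun i => i.elim0), husm _, ?_⟩
    intro m z hz
    have h := hud (fun _ => m) z hz
    rw [dbarF_zero_expand] at h
    exact h
  -- boundedness helpers
  have hkEbd : ∀ i : Fin 3, IsBddOn Ω (kE a i) := fun i =>
    IsBddOn.of_continuous hbdd (kE_contDiff ha i).continuous
  have hkAbd : ∀ i j m : Fin 3, IsBddOn Ω (kA a W i j m) := fun i j m =>
    ((hkEbd i).mul (hWbd j m)).sub ((hkEbd j).mul (hWbd i m))
  have hcoordsm : ∀ j : Fin 3, ContDiffOn ℝ (⊤:ℕ∞) (fun w : Fin 3 → ℂ => w j) Ω := fun j =>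
    ((ContinuousLinearMap.proj (R := ℝ) j : (Fin 3 → ℂ) →L[ℝ] ℂ).contDiff).contDiffOn
  -- the three potentials
  obtain ⟨y3, hy3sm, hy3⟩ := happ (fun m w => kA a W 0 1 m w - w 2 * v (fun _ => m) w)
    (fun m => (kA_contDiffOn ha hWsm 0 1 m).sub ((hcoordsm 2).mul (hvmsm m)))
    (fun m => (hkAbd 0 1 m).sub ((isBddOn_coord hbdd 2).mul (hvmbd m)))
    (by
      intro k l z hz
      have e1 : wdbar (fun w => kA a W 0 1 l w - w 2 * v (fun _ => l) w) k z
          = wdbar (kA a W 0 1 l) k z - z 2 * wdbar (v fun _ => l) k z := by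
        rw [wdbar_sub (hdA 0 1 l hz) ((differentiableAt_coord 2 z).fun_mul (hdv l hz)),
          wdbar_coord_mul (hdv l hz) 2 k]
      have e2 : wdbar (fun w => kA a W 0 1 k w - w 2 * v (fun _ => k) w) l z
          = wdbar (kA a W 0 1 k) l z - z 2 * wdbar (v fun _ => k) l z := by
        rw [wdbar_sub (hdA 0 1 k hz) ((differentiableAt_coord 2 z).fun_mul (hdv k hz)),
          wdbar_coord_mul (hdv k hz) 2 l]
      rw [e1, e2]
      have hB := (hKK k l hz).1
      have hBv : kB a W 0 1 k l z
          = wdbar (kA a W 0 1 l) k z - wdbar (kA a W 0 1 k) l z := rfl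
      have hKG := hFV k l z hz
      linear_combination (hBv.symm.trans hB) - z 2 * hKG)
  obtain ⟨y2, hy2sm, hy2⟩ := happ (fun m w => kA a W 0 2 m w + w 1 * v (fun _ => m) w)
    (fun m => (kA_contDiffOn ha hWsm 0 2 m).add ((hcoordsm 1).mul (hvmsm m)))
    (fun m => (hkAbd 0 2 m).add ((isBddOn_coord hbdd 1).mul (hvmbd m)))
    (by
      intro k l z hz
      have e1 : wdbar (fun w => kA a W 0 2 l w + w 1 * v (fun _ => l) w) k z
          = wdbar (kA a W 0 2 l) k z + z 1 * wdbar (v fun _ => l) k z := by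
        rw [wdbar_add (hdA 0 2 l hz) ((differentiableAt_coord 1 z).fun_mul (hdv l hz)),
          wdbar_coord_mul (hdv l hz) 1 k]
      have e2 : wdbar (fun w => kA a W 0 2 k w + w 1 * v (fun _ => k) w) l z
          = wdbar (kA a W 0 2 k) l z + z 1 * wdbar (v fun _ => k) l z := by
        rw [wdbar_add (hdA 0 2 k hz) ((differentiableAt_coord 1 z).fun_mul (hdv k hz)),
          wdbar_coord_mul (hdv k hz) 1 l]
      rw [e1, e2]
      have hB := (hKK k l hz).2.1
      have hBv : kB a W 0 2 k l z
          = wdbar (kA a W 0 2 l) k z - wdbar (kA a W 0 2 k) l z := rfl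
      have hKG := hFV k l z hz
      linear_combination (hBv.symm.trans hB) + z 1 * hKG)
  obtain ⟨y1, hy1sm, hy1⟩ := happ (fun m w => kA a W 1 2 m w - w 0 * v (fun _ => m) w)
    (fun m => (kA_contDiffOn ha hWsm 1 2 m).sub ((hcoordsm 0).mul (hvmsm m)))
    (fun m => (hkAbd 1 2 m).sub ((isBddOn_coord hbdd 0).mul (hvmbd m)))
    (by
      intro k l z hz
      have e1 : wdbar (fun w => kA a W 1 2 l w - w 0 * v (fun _ => l) w) k z
          = wdbar (kA a W 1 2 l) k z - z 0 * wdbar (v fun _ => l) k z := by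
        rw [wdbar_sub (hdA 1 2 l hz) ((differentiableAt_coord 0 z).fun_mul (hdv l hz)),
          wdbar_coord_mul (hdv l hz) 0 k]
      have e2 : wdbar (fun w => kA a W 1 2 k w - w 0 * v (fun _ => k) w) l z
          = wdbar (kA a W 1 2 k) l z - z 0 * wdbar (v fun _ => k) l z := by
        rw [wdbar_sub (hdA 1 2 k hz) ((differentiableAt_coord 0 z).fun_mul (hdv k hz)),
          wdbar_coord_mul (hdv k hz) 0 l]
      rw [e1, e2]
      have hB := (hKK k l hz).2.2
      have hBv : kB a W 1 2 k l z
          = wdbar (kA a W 1 2 l) k z - wdbar (kA a W 1 2 k) l z := rfl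
      have hKG := hFV k l z hz
      linear_combination (hBv.symm.trans hB) - z 0 * hKG)
  refine ⟨y1, y2, y3, hy1sm, hy2sm, hy3sm, ?_⟩
  intro k z hz
  have hT0 := kT_eq hopen ha hae hWtau hW0' 0 k hz
  have hT1 := kT_eq hopen ha hae hWtau hW0' 1 k hz
  have hT2 := kT_eq hopen ha hae hWtau hW0' 2 k hz
  rw [hW0e] at hT0
  rw [hW1e] at hT1
  rw [hW2e] at hT2
  have e3 := hy3 k z hz
  have e2 := hy2 k z hz
  have e1 := hy1 k z hz
  refine ⟨?_, ?_, ?_⟩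
  · rw [e3, e2]
    simp only [kA, kE, hW0e, hW1e, hW2e] at hT0 ⊢
    linear_combination -hT0
  · rw [e3, e1]
    simp only [kA, kE, hW0e, hW1e, hW2e] at hT1 ⊢
    linear_combination -hT1
  · rw [e2, e1]
    simp only [kA, kE, hW0e, hW1e, hW2e] at hT2 ⊢
    linear_combination -hT2
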